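/- Let f be nondecreasing and satisfy (H1), (H2) and (H3). There exist C > 0 and ε₀ > 0, independent of ρ, such that for every ρ > 1, every ε ∈ (0, ε₀), and every truncated maximizer ζ^{ε,ρ} as in the context: E_{ε,ρ}(ζ^{ε,ρ}) ≥ (κ²/(4π))·log(1/ε) − C. -/

import Mathlib

open MeasureTheory Real Filter
open scoped ENNReal Topology

noncomputable section

abbrev Pt : Type := EuclideanSpace ℝ (Fin 2)

/-- The point (a, b) in the plane. -/
def pt (a b : ℝ) : Pt := WithLp.toLp 2 ![a, b]

/-- The open right half plane Π. -/
def halfPlane : Set Pt := {x | 0 < x 0}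

/-- Reflection across the x₂-axis: x ↦ x̄. -/
def reflect (x : Pt) : Pt := pt (-(x 0)) (x 1)

/-- Reflection across the x₁-axis. -/
def flip2 (x : Pt) : Pt := pt (x 0) (-(x 1))

/-- Green's function of -Δ in the half plane with zero Dirichlet data. -/
def G (x y : Pt) : ℝ := (1 / (2 * π)) * Real.log (dist (reflect x) y / dist x y)

/-- Green's operator. -/
def Gop (ζ : Pt → ℝ) (x : Pt) : ℝ := ∫ y in halfPlane, G x y * ζ y

/-- The rectangle D. -/
def Dset (r : ℝ) : Set Pt := {x | r/2 < x 0 ∧ x 0 < 2*r ∧ -1 < x 1 ∧ x 1 < 1}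

/-- The admissible class A. -/
structure InA (r κ : ℝ) (ζ : Pt → ℝ) : Prop where
  measurable : Measurable ζ
  essBdd : ∃ M : ℝ, ∀ᵐ x ∂(volume : Measure Pt), |ζ x| ≤ M
  nonneg : ∀ᵐ x ∂(volume : Measure Pt), 0 ≤ ζ x
  mass_le : (∫ x in halfPlane, ζ x) ≤ κ
  support_ae : ∀ᵐ x ∂(volume : Measure Pt), x ∉ Dset r → ζ x = 0

/-- F(s) = ∫₀ˢ f(t) dt. -/
def Fint (f : ℝ → ℝ) (s : ℝ) : ℝ := ∫ t in (0:ℝ)..s, f t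

/-- The convex conjugate J of F, with values in [0, +∞] (note J ≥ 0 since F(0) = 0). -/
def Jconj (f : ℝ → ℝ) (s : ℝ) : ℝ≥0∞ := ⨆ t : ℝ, ENNReal.ofReal (s * t - Fint f t)

/-- The energy functional E_ε, with values in [-∞, +∞). -/
def energy (f : ℝ → ℝ) (r W ε : ℝ) (ζ : Pt → ℝ) : EReal :=
  (((1/2) * (∫ x in Dset r, ζ x * Gop ζ x) - W * ∫ x in Dset r, (x 0) * ζ x : ℝ) : EReal)
  - ((ENNReal.ofReal (ε⁻¹ ^ 2) * ∫⁻ x in Dset r, Jconj f (ε^2 * ζ x) : ℝ≥0∞) : EReal)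

/-- Steiner symmetry with respect to the line x₂ = 0. -/
def SteinerSym (ζ : Pt → ℝ) : Prop :=
  (∀ᵐ x ∂(volume : Measure Pt), ζ (flip2 x) = ζ x) ∧
  (∀ᵐ x₁ ∂(volume : Measure ℝ), ∃ g : ℝ → ℝ,
      (∀ᵐ x₂ ∂(volume : Measure ℝ), ζ (pt x₁ x₂) = g x₂) ∧
      ∀ s t : ℝ, |s| ≤ |t| → g t ≤ g s)

/-- Hypothesis (H1). -/
def H1 (f : ℝ → ℝ) : Prop := (∀ s ≤ 0, f s = 0) ∧ ∀ s, 0 < s → 0 < f s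

/-- ζ is a maximizer of E_ε over A. -/
def IsMaximizer (f : ℝ → ℝ) (r W κ ε : ℝ) (ζ : Pt → ℝ) : Prop :=
  InA r κ ζ ∧ ∀ ζ', InA r κ ζ' → energy f r W ε ζ' ≤ energy f r W ε ζ

/-- μ is a Lagrange multiplier for ζ. -/
def IsLM (f : ℝ → ℝ) (r W ε : ℝ) (ζ : Pt → ℝ) (μ : ℝ) : Prop :=
  0 ≤ μ ∧ ∀ᵐ x ∂(volume : Measure Pt), x ∈ Dset r →
    ζ x = ε⁻¹^2 * f (Gop ζ x - W * x 0 - μ)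

/-- The essential support of ζ. -/
def essSupport (ζ : Pt → ℝ) : Set Pt :=
  {x | ∀ U ∈ nhds x, volume {y ∈ U | ζ y ≠ 0} ≠ 0}

/-- The odd extension of ζ across the x₂-axis. -/
def oddExt (ζ : Pt → ℝ) (x : Pt) : ℝ :=
  if 0 < x 0 then ζ x else if x 0 < 0 then -(ζ (reflect x)) else 0

/-- The truncated nonlinearity f_ρ. -/
def ftr (f : ℝ → ℝ) (ρ : ℝ) (s : ℝ) : ℝ := min (f s) (f ρ)

/-- A (Steiner-symmetric) maximizer of the truncated energy E_{ε,ρ} over A, together with a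
Lagrange multiplier μ, solving the truncated equation on the half plane with total mass κ. -/
def IsTruncMax (f : ℝ → ℝ) (r W κ ε ρ : ℝ) (ζ : Pt → ℝ) (μ : ℝ) : Prop :=
  InA r κ ζ ∧ SteinerSym ζ ∧
  (∀ ζ', InA r κ ζ' → energy (ftr f ρ) r W ε ζ' ≤ energy (ftr f ρ) r W ε ζ) ∧
  0 ≤ μ ∧
  (∀ᵐ x ∂(volume : Measure Pt), x ∈ halfPlane →
     ζ x = ε⁻¹^2 * ftr f ρ (Gop ζ x - W * x 0 - μ)) ∧
  (∫ x in halfPlane, ζ x) = κ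

section Helpers

lemma pt_zero (a b : ℝ) : pt a b 0 = a := rfl
lemma pt_one (a b : ℝ) : pt a b 1 = b := rfl

lemma abs_coord_le_dist (x y : Pt) (i : Fin 2) : |x i - y i| ≤ dist x y := by
  rw [EuclideanSpace.dist_eq]
  have h : |x i - y i| = Real.sqrt (dist (x i) (y i) ^ 2) := by
    rw [Real.sqrt_sq_eq_abs, Real.dist_eq, abs_abs]
  rw [h]
  exact Real.sqrt_le_sqrt
    (Finset.single_le_sum (f := fun j => dist (x j) (y j) ^ 2)
      (fun j _ => sq_nonneg _) (Finset.mem_univ i))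

lemma dist_le_sum_coords (x y : Pt) : dist x y ≤ |x 0 - y 0| + |x 1 - y 1| := by
  rw [EuclideanSpace.dist_eq, Fin.sum_univ_two]
  have h2 : Real.sqrt ((|x 0 - y 0| + |x 1 - y 1|) ^ 2) = |x 0 - y 0| + |x 1 - y 1| := by
    rw [Real.sqrt_sq (by positivity)]
  calc Real.sqrt (dist (x 0) (y 0) ^ 2 + dist (x 1) (y 1) ^ 2)
      ≤ Real.sqrt ((|x 0 - y 0| + |x 1 - y 1|) ^ 2) := by
        apply Real.sqrt_le_sqrt
        rw [Real.dist_eq, Real.dist_eq]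
        nlinarith [abs_nonneg (x 0 - y 0), abs_nonneg (x 1 - y 1)]
    _ = _ := h2

lemma abs_log_le_of_mem {a b t : ℝ} (ha : 0 < a) (h1 : a ≤ t) (h2 : t ≤ b) :
    |Real.log t| ≤ |Real.log a| + |Real.log b| := by
  have l1 : Real.log a ≤ Real.log t := Real.log_le_log ha h1
  have l2 : Real.log t ≤ Real.log b := Real.log_le_log (lt_of_lt_of_le ha h1) h2
  rw [abs_le]
  constructor
  · have := neg_abs_le (Real.log a); have := abs_nonneg (Real.log b); linarith
  · have := le_abs_self (Real.log b); have := abs_nonneg (Real.log a); linarith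

lemma measurable_coord (i : Fin 2) : Measurable (fun x : Pt => x i) :=
  (measurable_pi_apply i).comp (WithLp.measurable_ofLp 2 _)

lemma measurableSet_halfPlane : MeasurableSet halfPlane :=
  measurableSet_lt measurable_const (measurable_coord 0)

lemma measurable_reflect : Measurable (reflect : Pt → Pt) := by
  show Measurable (fun x : Pt => WithLp.toLp 2 ![-(x 0), x 1])
  refine (WithLp.measurable_toLp 2 _).comp (f := fun x : Pt => ![-(x 0), x 1]) ?_
  apply measurable_pi_lambda
  intro i
  fin_cases i
  · simpa [reflect, pt] using (measurable_coord 0)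
  · simpa [reflect, pt] using (measurable_coord 1)

lemma measurable_G2 : Measurable (fun p : Pt × Pt => G p.1 p.2) := by
  unfold G
  apply Measurable.const_mul
  apply Real.measurable_log.comp
  exact ((measurable_reflect.comp measurable_fst).dist measurable_snd).div
    (measurable_fst.dist measurable_snd)

end Helpers
section LogIntegrable

open ENNReal

lemma lintegral_log_dist_ball (x : Pt) {R : ℝ} (hR : 0 < R) :
    ∫⁻ y in Metric.ball x R, ‖Real.log (dist x y)‖₊ ∂volume
      ≤ ENNReal.ofReal (8 * (|Real.log R| + Real.log 2) * (π * R ^ 2)) := by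
  set A : ℕ → Set Pt := fun n => (fun y => dist x y) ⁻¹' (Set.Ico (R / 2 ^ (n+1)) (R / 2 ^ n))
    with hA
  have hmeasd : Measurable (fun y : Pt => dist x y) := measurable_const.dist measurable_id
  have hAm : ∀ n, MeasurableSet (A n) := fun n => hmeasd measurableSet_Ico
  -- cover
  have hcover : Metric.ball x R ⊆ {x} ∪ ⋃ n, A n := by
    intro y hy
    rcases eq_or_ne y x with h | h
    · exact Or.inl (by simp [h])
    · right
      have hd : 0 < dist x y := dist_pos.mpr (Ne.symm h)
      have hdR : dist x y < R := by rw [dist_comm]; exact Metric.mem_ball.mp hy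
      have hex : ∃ n : ℕ, R ≤ dist x y * 2 ^ (n+1) := by
        obtain ⟨n, hn⟩ := pow_unbounded_of_one_lt (R / dist x y) (one_lt_two (α := ℝ))
        refine ⟨n, ?_⟩
        rw [div_lt_iff₀ hd] at hn
        have h2p : (2:ℝ) ^ (n+1) = 2 * 2 ^ n := by ring
        nlinarith [pow_pos (zero_lt_two (α := ℝ)) n]
      set N := Nat.find hex with hN
      have hfind : R ≤ dist x y * 2 ^ (N+1) := Nat.find_spec hex
      refine Set.mem_iUnion.mpr ⟨N, ?_, ?_⟩
      · rw [div_le_iff₀ (by positivity)]; linarith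
      · rcases Nat.eq_zero_or_pos N with h0 | h0
        · rw [h0]; simpa using hdR
        · obtain ⟨m, hm⟩ := Nat.exists_eq_succ_of_ne_zero h0.ne'
          have hnot : ¬ (R ≤ dist x y * 2 ^ (m+1)) := Nat.find_min hex (by omega)
          push_neg at hnot
          rw [lt_div_iff₀ (by positivity), hm, Nat.succ_eq_add_one]
          linarith
  have hsingle : ∫⁻ y in ({x} : Set Pt), ‖Real.log (dist x y)‖₊ ∂volume = 0 :=
    setLIntegral_measure_zero _ _ (measure_singleton x)
  -- per-annulus bound
  have hann : ∀ n : ℕ, ∫⁻ y in A n, ‖Real.log (dist x y)‖₊ ∂volume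
      ≤ ENNReal.ofReal ((2 * |Real.log R| + (2 * n + 2) * Real.log 2) * (π * (R / 2 ^ n) ^ 2)) := by
    intro n
    have hlo : (0:ℝ) < R / 2 ^ (n+1) := by positivity
    have hc : ∀ y ∈ A n, (‖Real.log (dist x y)‖₊ : ℝ≥0∞)
        ≤ ENNReal.ofReal (2 * |Real.log R| + (2 * n + 2) * Real.log 2) := by
      intro y hy
      obtain ⟨h1, h2⟩ := hy
      rw [show (‖Real.log (dist x y)‖₊ : ℝ≥0∞) = ‖Real.log (dist x y)‖ₑ from rfl, Real.enorm_eq_ofReal_abs]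
      apply ENNReal.ofReal_le_ofReal
      have key : |Real.log (dist x y)| ≤ |Real.log (R / 2 ^ (n+1))| + |Real.log (R / 2 ^ n)| :=
        abs_log_le_of_mem hlo h1 h2.le
      have hlog : ∀ k : ℕ, |Real.log (R / 2 ^ k)| ≤ |Real.log R| + k * Real.log 2 := by
        intro k
        rw [Real.log_div hR.ne' (by positivity), Real.log_pow]
        calc |Real.log R - k * Real.log 2| ≤ |Real.log R| + |(k : ℝ) * Real.log 2| :=
              abs_sub _ _
          _ = |Real.log R| + k * Real.log 2 := by
              rw [abs_of_nonneg (mul_nonneg (Nat.cast_nonneg k)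
                (Real.log_nonneg (by norm_num)))]
      have k1 := hlog (n+1); have k2 := hlog n
      have hlog2 : (0:ℝ) ≤ Real.log 2 := Real.log_nonneg (by norm_num)
      push_cast at k1 k2 ⊢
      linarith
    calc ∫⁻ y in A n, ‖Real.log (dist x y)‖₊ ∂volume
        ≤ ∫⁻ _ in A n, ENNReal.ofReal (2 * |Real.log R| + (2 * n + 2) * Real.log 2) ∂volume :=
          setLIntegral_mono measurable_const hc
      _ = ENNReal.ofReal (2 * |Real.log R| + (2 * n + 2) * Real.log 2) * volume (A n) := by
          rw [setLIntegral_const]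
      _ ≤ ENNReal.ofReal (2 * |Real.log R| + (2 * n + 2) * Real.log 2)
            * ENNReal.ofReal (π * (R / 2 ^ n) ^ 2) := by
          gcongr
          have hsub : A n ⊆ Metric.ball x (R / 2 ^ n) := by
            intro y hy; rw [Metric.mem_ball, dist_comm]; exact hy.2
          calc volume (A n) ≤ volume (Metric.ball x (R / 2 ^ n)) := measure_mono hsub
            _ = ENNReal.ofReal (π * (R / 2 ^ n) ^ 2) := by
                rw [EuclideanSpace.volume_ball, Fintype.card_fin]
                rw [show ((2:ℕ):ℝ) / 2 + 1 = 2 by norm_num, Real.Gamma_two]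
                rw [← ENNReal.ofReal_pow (by positivity), ← ENNReal.ofReal_mul (by positivity)]
                congr 1
                rw [div_one, Real.sq_sqrt Real.pi_nonneg]
                ring
      _ = ENNReal.ofReal ((2 * |Real.log R| + (2 * n + 2) * Real.log 2) * (π * (R / 2 ^ n) ^ 2)) := by
          have hlog2 : (0:ℝ) ≤ Real.log 2 := Real.log_nonneg (by norm_num)
          rw [← ENNReal.ofReal_mul (by nlinarith [abs_nonneg (Real.log R), (Nat.cast_nonneg n : (0:ℝ) ≤ n)])]
  -- geometric series bound
  have hgeo : ∀ n : ℕ, ENNReal.ofReal ((2 * |Real.log R| + (2 * n + 2) * Real.log 2)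
        * (π * (R / 2 ^ n) ^ 2))
      ≤ ENNReal.ofReal (4 * (|Real.log R| + Real.log 2) * (π * R ^ 2)) * (ENNReal.ofReal 2⁻¹) ^ n := by
    intro n
    rw [← ENNReal.ofReal_pow (by norm_num), ← ENNReal.ofReal_mul (by positivity)]
    apply ENNReal.ofReal_le_ofReal
    have hlog2 : (0:ℝ) ≤ Real.log 2 := Real.log_nonneg (by norm_num)
    have hn2 : (n : ℝ) + 1 ≤ 2 ^ n * 2 := by
      have ha : (n : ℝ) < 2 ^ n := by exact_mod_cast Nat.lt_two_pow_self (n := n)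
      have hb : (1:ℝ) ≤ 2 ^ n := by exact_mod_cast Nat.one_le_two_pow (n := n)
      linarith
    have hterm : 2 * |Real.log R| + (2 * n + 2) * Real.log 2
        ≤ 2 * (|Real.log R| + Real.log 2) * ((n:ℝ) + 1) := by
      nlinarith [abs_nonneg (Real.log R)]
    have hpow : ((R / 2 ^ n) ^ 2 : ℝ) = R ^ 2 * (2⁻¹) ^ n * (2⁻¹) ^ n := by
      have h2n0 : ((2:ℝ) ^ n) ≠ 0 := by positivity
      rw [inv_pow, div_pow]
      field_simp
    have h2n : (0:ℝ) < (2:ℝ)⁻¹ ^ n := by positivity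
    have hle1 : ((2:ℝ)⁻¹) ^ n * ((n:ℝ)+1) ≤ 2 := by
      have : ((2:ℝ)⁻¹) ^ n * ((n:ℝ)+1) ≤ ((2:ℝ)⁻¹) ^ n * (2 ^ n * 2) := by
        apply mul_le_mul_of_nonneg_left hn2 (by positivity)
      calc ((2:ℝ)⁻¹) ^ n * ((n:ℝ)+1) ≤ ((2:ℝ)⁻¹) ^ n * (2 ^ n * 2) := this
        _ = 2 := by rw [← mul_assoc, ← mul_pow]; norm_num
    calc (2 * |Real.log R| + (2 * n + 2) * Real.log 2) * (π * (R / 2 ^ n) ^ 2)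
        ≤ (2 * (|Real.log R| + Real.log 2) * ((n:ℝ) + 1)) * (π * (R / 2 ^ n) ^ 2) := by
          apply mul_le_mul_of_nonneg_right hterm (by positivity)
      _ = (2 * (|Real.log R| + Real.log 2)) * (π * R ^ 2) * ((2⁻¹) ^ n * ((n:ℝ)+1)) * (2⁻¹) ^ n := by
          rw [hpow]; ring
      _ ≤ (2 * (|Real.log R| + Real.log 2)) * (π * R ^ 2) * 2 * (2⁻¹) ^ n := by
          apply mul_le_mul_of_nonneg_right _ (by positivity)
          apply mul_le_mul_of_nonneg_left hle1 (by positivity)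
      _ = 4 * (|Real.log R| + Real.log 2) * (π * R ^ 2) * 2⁻¹ ^ n := by ring
  -- assemble
  calc ∫⁻ y in Metric.ball x R, ‖Real.log (dist x y)‖₊ ∂volume
      ≤ ∫⁻ y in ({x} : Set Pt) ∪ ⋃ n, A n, ‖Real.log (dist x y)‖₊ ∂volume :=
        lintegral_mono_set hcover
    _ ≤ (∫⁻ y in ({x} : Set Pt), ‖Real.log (dist x y)‖₊ ∂volume)
          + ∫⁻ y in ⋃ n, A n, ‖Real.log (dist x y)‖₊ ∂volume := lintegral_union_le _ _ _
    _ ≤ 0 + ∑' n, ∫⁻ y in A n, ‖Real.log (dist x y)‖₊ ∂volume := by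
        rw [hsingle]; exact add_le_add le_rfl (lintegral_iUnion_le _ _)
    _ ≤ ∑' n, ENNReal.ofReal (4 * (|Real.log R| + Real.log 2) * (π * R ^ 2))
          * (ENNReal.ofReal 2⁻¹) ^ n := by
        rw [zero_add]; exact ENNReal.tsum_le_tsum (fun n => le_trans (hann n) (hgeo n))
    _ = ENNReal.ofReal (4 * (|Real.log R| + Real.log 2) * (π * R ^ 2))
          * (1 - ENNReal.ofReal 2⁻¹)⁻¹ := by
        rw [ENNReal.tsum_mul_left, ENNReal.tsum_geometric]
    _ ≤ ENNReal.ofReal (8 * (|Real.log R| + Real.log 2) * (π * R ^ 2)) := by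
        have h12 : ENNReal.ofReal (2⁻¹ : ℝ) = 2⁻¹ := by
          rw [ENNReal.ofReal_inv_of_pos (by norm_num)]; norm_num
        rw [h12, ENNReal.one_sub_inv_two, inv_inv]
        have hlog2 : (0:ℝ) ≤ Real.log 2 := Real.log_nonneg (by norm_num)
        have hL : (0:ℝ) ≤ 4 * (|Real.log R| + Real.log 2) * (π * R ^ 2) := by
          have := mul_nonneg Real.pi_nonneg (sq_nonneg R)
          nlinarith [abs_nonneg (Real.log R)]
        rw [show (2:ℝ≥0∞) = ENNReal.ofReal 2 by simp, ← ENNReal.ofReal_mul hL]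
        apply ENNReal.ofReal_le_ofReal
        apply le_of_eq; ring

end LogIntegrable
section LogIntegrable2

lemma measurable_log_dist (x : Pt) : Measurable (fun y : Pt => Real.log (dist x y)) :=
  Real.measurable_log.comp (measurable_const.dist measurable_id)

lemma integrableOn_log_dist (x : Pt) {R : ℝ} (hR : 0 < R) :
    IntegrableOn (fun y => Real.log (dist x y)) (Metric.ball x R) volume := by
  refine ⟨(measurable_log_dist x).aestronglyMeasurable, ?_⟩
  show (∫⁻ y in Metric.ball x R, ‖Real.log (dist x y)‖₊ ∂volume) < ⊤
  exact lt_of_le_of_lt (lintegral_log_dist_ball x hR) ENNReal.ofReal_lt_top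

lemma integral_abs_log_dist_ball (x : Pt) {R : ℝ} (hR : 0 < R) :
    (∫ y in Metric.ball x R, |Real.log (dist x y)|)
      ≤ 8 * (|Real.log R| + Real.log 2) * (π * R ^ 2) := by
  have hlog2 : (0:ℝ) ≤ Real.log 2 := Real.log_nonneg (by norm_num)
  have hnn : (0:ℝ) ≤ 8 * (|Real.log R| + Real.log 2) * (π * R ^ 2) := by
    have := mul_nonneg Real.pi_nonneg (sq_nonneg R)
    nlinarith [abs_nonneg (Real.log R)]
  have h1 : (∫ y in Metric.ball x R, |Real.log (dist x y)|)
      = (∫⁻ y in Metric.ball x R, ‖Real.log (dist x y)‖₊ ∂volume).toReal := by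
    have := integral_norm_eq_lintegral_enorm (μ := volume.restrict (Metric.ball x R))
      (f := fun y : Pt => Real.log (dist x y)) (measurable_log_dist x).aestronglyMeasurable
    show _ = (∫⁻ y in Metric.ball x R, ‖Real.log (dist x y)‖ₑ ∂volume).toReal
    simpa [Real.norm_eq_abs] using this
  rw [h1]
  exact ENNReal.toReal_le_of_le_ofReal hnn (lintegral_log_dist_ball x hR)

end LogIntegrable2

section JconjLemmas

variable {f : ℝ → ℝ} {ρ : ℝ}

lemma f_nonneg (hf : Monotone f) (hf1 : H1 f) : ∀ s, 0 ≤ f s := by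
  intro s
  rcases le_or_gt s 0 with h | h
  · rw [hf1.1 s h]
  · exact (hf1.2 s h).le

lemma ftr_nonneg (hf : Monotone f) (hf1 : H1 f) : ∀ s, 0 ≤ ftr f ρ s := fun s =>
  le_min (f_nonneg hf hf1 s) (f_nonneg hf hf1 ρ)

lemma ftr_monotone (hf : Monotone f) : Monotone (ftr f ρ) := hf.min monotone_const

lemma Fint_ftr_nonpos (hf : Monotone f) (hf1 : H1 f) {t : ℝ} (ht : t ≤ 0) :
    Fint (ftr f ρ) t = 0 := by
  unfold Fint
  rw [intervalIntegral.integral_symm]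
  have : ∫ s in t..(0:ℝ), ftr f ρ s = ∫ s in t..(0:ℝ), (0:ℝ) := by
    apply intervalIntegral.integral_congr
    intro s hs
    rw [Set.uIcc_of_le ht] at hs
    have hs0 : s ≤ 0 := hs.2
    simp [ftr, hf1.1 s hs0, f_nonneg hf hf1 ρ]
  rw [this, intervalIntegral.integral_zero, neg_zero]

lemma Fint_ftr_nonneg (hf : Monotone f) (hf1 : H1 f) (t : ℝ) :
    0 ≤ Fint (ftr f ρ) t := by
  rcases le_or_gt t 0 with h | h
  · rw [Fint_ftr_nonpos hf hf1 h]
  · exact intervalIntegral.integral_nonneg h.le (fun s _ => ftr_nonneg hf hf1 s)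

lemma jconj_zero (hf : Monotone f) (hf1 : H1 f) : Jconj (ftr f ρ) 0 = 0 := by
  unfold Jconj
  simp only [zero_mul, zero_sub]
  apply le_antisymm _ (zero_le)
  apply iSup_le
  intro t
  rw [ENNReal.ofReal_eq_zero.mpr (by simpa using Fint_ftr_nonneg hf hf1 t)]

lemma jconj_f1 (hf : Monotone f) (hf1 : H1 f) (hρ : 1 < ρ) :
    Jconj (ftr f ρ) (f 1) ≤ ENNReal.ofReal (f 1) := by
  apply iSup_le
  intro t
  apply ENNReal.ofReal_le_ofReal
  have hf1n : 0 ≤ f 1 := f_nonneg hf hf1 1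
  rcases le_or_gt t 0 with h | h
  · rw [Fint_ftr_nonpos hf hf1 h]
    nlinarith
  · rcases le_or_gt t 1 with h1 | h1
    · have := Fint_ftr_nonneg (ρ := ρ) hf hf1 t
      nlinarith
    · -- t > 1
      have hint : ∀ a b : ℝ, IntervalIntegrable (ftr f ρ) volume a b :=
        fun a b => (ftr_monotone hf).intervalIntegrable
      have hsplit : Fint (ftr f ρ) t = Fint (ftr f ρ) 1 + ∫ s in (1:ℝ)..t, ftr f ρ s := by
        unfold Fint
        rw [intervalIntegral.integral_add_adjacent_intervals (hint 0 1) (hint 1 t)]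
      have hlow : f 1 * (t - 1) ≤ ∫ s in (1:ℝ)..t, ftr f ρ s := by
        have hconst : ∫ s in (1:ℝ)..t, (f 1) = (t - 1) * f 1 := by
          rw [intervalIntegral.integral_const, smul_eq_mul]
        have hmono : ∫ s in (1:ℝ)..t, (f 1) ≤ ∫ s in (1:ℝ)..t, ftr f ρ s := by
          apply intervalIntegral.integral_mono_on h1.le intervalIntegrable_const (hint 1 t)
          intro s hs
          exact le_min (hf hs.1) (hf hρ.le)
        linarith
      have h01 : 0 ≤ Fint (ftr f ρ) 1 := Fint_ftr_nonneg hf hf1 1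
      rw [hsplit]
      nlinarith

end JconjLemmas
set_option maxHeartbeats 1600000 in
theorem statement_17
    (r κ W : ℝ) (hr : 0 < r) (hκ : 0 < κ) (hW : W = κ / (4 * π * r))
    (f : ℝ → ℝ) (hf : Monotone f) (hf1 : H1 f)
    (ϑ₀ ϑ₁ : ℝ) (hϑ₀ : 0 < ϑ₀) (hϑ₀' : ϑ₀ < 1) (hϑ₁ : 0 < ϑ₁)
    (hH2 : ∀ s, 0 ≤ s → Fint f s ≤ ϑ₀ * f s * s + ϑ₁ * f s)
    (hH3 : Filter.liminf
      (fun s => f s * Real.exp (-(4 * π * min (2 * ϑ₀) (2 - 2 * ϑ₀) / κ) * s)) Filter.atTop = 0) :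
    ∃ C > (0:ℝ), ∃ ε₀ > (0:ℝ), ∀ ρ : ℝ, 1 < ρ → ∀ ε : ℝ, 0 < ε → ε < ε₀ →
      ∀ ζ μ, IsTruncMax f r W κ ε ρ ζ μ →
        ((κ ^ 2 / (4 * π) * Real.log (1 / ε) - C : ℝ) : EReal) ≤ energy (ftr f ρ) r W ε ζ := by
  have hπ : 0 < π := Real.pi_pos
  have hf1pos : 0 < f 1 := hf1.2 1 one_pos
  set s₀ : ℝ := Real.sqrt (κ / (π * f 1)) with hs₀def
  have hs₀ : 0 < s₀ := Real.sqrt_pos.mpr (div_pos hκ (mul_pos hπ hf1pos))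
  have hs₀sq : s₀ ^ 2 = κ / (π * f 1) := Real.sq_sqrt (le_of_lt (div_pos hκ (mul_pos hπ hf1pos)))
  refine ⟨κ^2/(4*π) * |Real.log (r / (2*s₀))| + κ^2/(2*π) + κ + 1, by positivity,
    min (r/4) (1/2) / s₀, div_pos (lt_min (by linarith) (by norm_num)) hs₀, ?_⟩
  set C : ℝ := κ^2/(4*π) * |Real.log (r / (2*s₀))| + κ^2/(2*π) + κ + 1 with hCdef
  intro ρ hρ ε hε hεε₀ ζ μ hmax
  set σ : ℝ := ε * s₀ with hσdef
  have hσ : 0 < σ := mul_pos hε hs₀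
  have hσlt : σ < min (r/4) (1/2) := by
    have := mul_lt_mul_of_pos_right hεε₀ hs₀
    calc σ = ε * s₀ := hσdef
      _ < (min (r/4) (1/2) / s₀) * s₀ := this
      _ = min (r/4) (1/2) := by field_simp
  have hσr : σ < r/4 := lt_of_lt_of_le hσlt (min_le_left _ _)
  have hσ1 : σ < 1/2 := lt_of_lt_of_le hσlt (min_le_right _ _)
  set x₀ : Pt := pt r 0 with hx₀def
  set B : Set Pt := Metric.ball x₀ σ with hBdef
  have hBm : MeasurableSet B := measurableSet_ball
  set c : ℝ := (ε^2)⁻¹ * f 1 with hcdef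
  have hc : 0 < c := mul_pos (inv_pos.mpr (by positivity)) hf1pos
  set ζ' : Pt → ℝ := B.indicator (fun _ => c) with hζ'def
  have hζ'meas : Measurable ζ' := measurable_const.indicator hBm
  -- coordinates of points in B
  have hBcoord : ∀ x ∈ B, |x 0 - r| < σ ∧ |x 1| < σ := by
    intro x hx
    have h0 := abs_coord_le_dist x x₀ 0
    have h1 := abs_coord_le_dist x x₀ 1
    rw [hx₀def, pt_zero] at h0
    rw [hx₀def, pt_one, sub_zero] at h1
    have hd := Metric.mem_ball.mp hx
    exact ⟨lt_of_le_of_lt h0 hd, lt_of_le_of_lt h1 hd⟩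
  have hB_half : B ⊆ halfPlane := by
    intro x hx
    have h := abs_lt.mp (hBcoord x hx).1
    show 0 < x 0
    linarith
  have hB_D : B ⊆ Dset r := by
    intro x hx
    have h0 := abs_lt.mp (hBcoord x hx).1
    have h1 := abs_lt.mp (hBcoord x hx).2
    exact ⟨by linarith, by linarith, by linarith, by linarith⟩
  -- volume of B
  have hvolB : volume B = ENNReal.ofReal (π * σ^2) := by
    rw [hBdef, EuclideanSpace.volume_ball, Fintype.card_fin]
    rw [show ((2:ℕ):ℝ) / 2 + 1 = 2 by norm_num, Real.Gamma_two]
    rw [← ENNReal.ofReal_pow hσ.le, ← ENNReal.ofReal_mul (by positivity)]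
    congr 1
    rw [div_one, Real.sq_sqrt Real.pi_nonneg]
    ring
  have hvolBne : volume B ≠ ⊤ := by rw [hvolB]; exact ENNReal.ofReal_ne_top
  have hvolBR : (volume B).toReal = π * σ^2 := by
    rw [hvolB, ENNReal.toReal_ofReal (by positivity)]
  have hmass_aux : c * (π * σ^2) = κ := by
    rw [hcdef, hσdef, mul_pow, hs₀sq]
    field_simp
  -- mass of ζ'
  have hmass : ∫ x in halfPlane, ζ' x = κ := by
    rw [hζ'def, setIntegral_indicator hBm, Set.inter_eq_self_of_subset_right hB_half,
      setIntegral_const, measureReal_def, hvolBR, smul_eq_mul, mul_comm, hmass_aux]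
  -- ζ' is admissible
  have hInA : InA r κ ζ' := by
    refine ⟨hζ'meas, ⟨c, ae_of_all _ fun x => ?_⟩, ae_of_all _ fun x => ?_, le_of_eq hmass,
      ae_of_all _ fun x hx => ?_⟩
    · by_cases hx : x ∈ B <;>
        simp [hζ'def, Set.indicator_of_mem, Set.indicator_of_notMem, hx,
          abs_of_nonneg hc.le, hc.le]
    · by_cases hx : x ∈ B <;>
        simp [hζ'def, Set.indicator_of_mem, Set.indicator_of_notMem, hx, hc.le]
    · exact Set.indicator_of_notMem (fun hB => hx (hB_D hB)) _
  -- distance estimates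
  have hd1 : ∀ x ∈ B, ∀ y ∈ B, r ≤ dist (reflect x) y := by
    intro x hx y hy
    have h := abs_coord_le_dist (reflect x) y 0
    have hrx : reflect x 0 = -(x 0) := rfl
    rw [hrx] at h
    have hx' := abs_lt.mp (hBcoord x hx).1
    have hy' := abs_lt.mp (hBcoord y hy).1
    have habs : |(-(x 0)) - y 0| = x 0 + y 0 := by
      rw [abs_of_nonpos (by linarith)]; ring
    rw [habs] at h
    linarith
  have hd2 : ∀ x ∈ B, ∀ y ∈ B, dist (reflect x) y ≤ 3*r := by
    intro x hx y hy
    have h := dist_le_sum_coords (reflect x) y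
    have hrx : reflect x 0 = -(x 0) := rfl
    have hrx1 : reflect x 1 = x 1 := rfl
    rw [hrx, hrx1] at h
    have hx0 := abs_lt.mp (hBcoord x hx).1
    have hy0 := abs_lt.mp (hBcoord y hy).1
    have hx1 := abs_lt.mp (hBcoord x hx).2
    have hy1 := abs_lt.mp (hBcoord y hy).2
    have e1 : |(-(x 0)) - y 0| = x 0 + y 0 := by
      rw [abs_of_nonpos (by linarith)]; ring
    have e2 : |x 1 - y 1| ≤ |x 1| + |y 1| := abs_sub _ _
    rw [e1] at h
    have := (abs_lt.mp (hBcoord x hx).2).2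
    have := (abs_lt.mp (hBcoord y hy).2).2
    have hx1' := (abs_lt.mp (hBcoord x hx).2).1
    have hy1' := (abs_lt.mp (hBcoord y hy).2).1
    have e3 : |x 1| < σ := (hBcoord x hx).2
    have e4 : |y 1| < σ := (hBcoord y hy).2
    linarith
  have hd3 : ∀ x ∈ B, ∀ y ∈ B, dist x y < 2*σ := by
    intro x hx y hy
    calc dist x y ≤ dist x x₀ + dist x₀ y := dist_triangle _ _ _
      _ = dist x x₀ + dist y x₀ := by rw [dist_comm x₀ y]
      _ < σ + σ := add_lt_add (Metric.mem_ball.mp hx) (Metric.mem_ball.mp hy)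
      _ = 2*σ := by ring
  set c₀ : ℝ := (1/(2*π)) * Real.log (r/(2*σ)) with hc₀def
  -- lower bound on G
  have hGlb : ∀ x ∈ B, ∀ y ∈ B, y ≠ x → c₀ ≤ G x y := by
    intro x hx y hy hne
    have hdxy : (0:ℝ) < dist x y := dist_pos.mpr hne.symm
    show c₀ ≤ (1 / (2 * π)) * Real.log (dist (reflect x) y / dist x y)
    rw [hc₀def]
    apply mul_le_mul_of_nonneg_left _ (by positivity)
    apply Real.log_le_log (by positivity)
    rw [div_le_div_iff₀ (by positivity) hdxy]
    have := hd1 x hx y hy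
    have := hd3 x hx y hy
    nlinarith
  -- upper bound on |G|
  have hGub : ∀ x ∈ B, ∀ y ∈ B, y ≠ x →
      |G x y| ≤ (1/(2*π)) * ((|Real.log r| + |Real.log (3*r)|) + |Real.log (dist x y)|) := by
    intro x hx y hy hne
    have hdxy : (0:ℝ) < dist x y := dist_pos.mpr hne.symm
    have hd1' := hd1 x hx y hy
    show |(1 / (2 * π)) * Real.log (dist (reflect x) y / dist x y)| ≤ _
    rw [Real.log_div (by linarith) hdxy.ne', abs_mul, abs_of_pos (by positivity : (0:ℝ) < 1/(2*π))]
    apply mul_le_mul_of_nonneg_left _ (by positivity)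
    calc |Real.log (dist (reflect x) y) - Real.log (dist x y)|
        ≤ |Real.log (dist (reflect x) y)| + |Real.log (dist x y)| := abs_sub _ _
      _ ≤ (|Real.log r| + |Real.log (3*r)|) + |Real.log (dist x y)| :=
          add_le_add_left (abs_log_le_of_mem hr hd1' (hd2 x hx y hy)) _
  -- integrability pieces
  have hBsub : ∀ x ∈ B, B ⊆ Metric.ball x (2*σ) := by
    intro x hx y hy
    exact Metric.mem_ball.mpr (hd3 y hy x hx)
  have hIntLog : ∀ x ∈ B, IntegrableOn (fun y => Real.log (dist x y)) B volume :=
    fun x hx => (integrableOn_log_dist x (by positivity)).mono_set (hBsub x hx)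
  have hIntLog1 : ∀ x ∈ B, IntegrableOn (fun y => Real.log (dist (reflect x) y)) B volume := by
    intro x hx
    apply Measure.integrableOn_of_bounded hvolBne
      (measurable_log_dist (reflect x)).aestronglyMeasurable
      (M := |Real.log r| + |Real.log (3*r)|)
    rw [ae_restrict_iff' hBm]
    refine ae_of_all _ fun y hy => ?_
    rw [Real.norm_eq_abs]
    exact abs_log_le_of_mem hr (hd1 x hx y hy) (hd2 x hx y hy)
  have hne_ae : ∀ x : Pt, ∀ᵐ y ∂(volume : Measure Pt), y ≠ x := by
    intro x
    rw [ae_iff]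
    simp only [ne_eq, not_not, Set.setOf_eq_eq_singleton]
    exact measure_singleton x
  have hIntG : ∀ x ∈ B, IntegrableOn (fun y => G x y) B volume := by
    intro x hx
    have hint : IntegrableOn
        (fun y => (1/(2*π)) * (Real.log (dist (reflect x) y) - Real.log (dist x y))) B volume :=
      ((hIntLog1 x hx).sub (hIntLog x hx)).const_mul _
    apply hint.congr
    filter_upwards [ae_restrict_mem hBm, ae_restrict_of_ae (hne_ae x)] with y hyB hyne
    have hdxy : (0:ℝ) < dist x y := dist_pos.mpr hyne.symm
    have hd1' := hd1 x hx y hyB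
    show (1/(2*π)) * (Real.log (dist (reflect x) y) - Real.log (dist x y)) = G x y
    show _ = (1 / (2 * π)) * Real.log (dist (reflect x) y / dist x y)
    rw [Real.log_div (by linarith) hdxy.ne']
  -- Gop of ζ' restricted to B
  have hGopEq : ∀ x : Pt, Gop ζ' x = ∫ y in B, G x y * c := by
    intro x
    show ∫ y in halfPlane, G x y * ζ' y = _
    have hrw : (fun y => G x y * ζ' y) = fun y => B.indicator (fun y => G x y * c) y := by
      funext y
      by_cases hy : y ∈ B <;>
        simp [hζ'def, Set.indicator_of_mem, Set.indicator_of_notMem, hy]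
    rw [hrw, setIntegral_indicator hBm, Set.inter_eq_self_of_subset_right hB_half]
  have hIntConst : ∀ C' : ℝ, IntegrableOn (fun _ : Pt => C') B volume :=
    fun C' => integrableOn_const hvolBne
  have hGoplb : ∀ x ∈ B, c₀ * κ ≤ Gop ζ' x := by
    intro x hx
    rw [hGopEq x]
    have hmono : ∫ _ in B, c₀ * c ≤ ∫ y in B, G x y * c := by
      apply setIntegral_mono_ae_restrict (hIntConst _) ((hIntG x hx).mul_const c)
      filter_upwards [ae_restrict_mem hBm, ae_restrict_of_ae (hne_ae x)] with y hyB hyne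
      exact mul_le_mul_of_nonneg_right (hGlb x hx y hyB hyne) hc.le
    calc c₀ * κ = (volume B).toReal • (c₀ * c) := by
          rw [hvolBR, smul_eq_mul, ← hmass_aux]; ring
      _ = ∫ _ in B, c₀ * c := (setIntegral_const _).symm
      _ ≤ _ := hmono
  -- uniform upper bound for Gop ζ' on B
  set K₁ : ℝ := |Real.log r| + |Real.log (3*r)| with hK₁def
  set K₂ : ℝ := 8 * (|Real.log (2*σ)| + Real.log 2) * (π * (2*σ) ^ 2) with hK₂def
  set M : ℝ := ((1/(2*π)) * (K₁ * (π*σ^2) + K₂)) * c with hMdef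
  have hGopub : ∀ x ∈ B, |Gop ζ' x| ≤ M := by
    intro x hx
    rw [hGopEq x]
    have habs : |∫ y in B, G x y * c| ≤ ∫ y in B, |G x y| * c := by
      have := norm_integral_le_integral_norm (μ := volume.restrict B) (fun y => G x y * c)
      simpa [Real.norm_eq_abs, abs_mul, abs_of_nonneg hc.le] using this
    have hstep : ∫ y in B, |G x y| ≤ (1/(2*π)) * (K₁ * (π*σ^2) + K₂) := by
      have hmono : ∫ y in B, |G x y| ≤ ∫ y in B, (1/(2*π)) * (K₁ + |Real.log (dist x y)|) := by
        apply setIntegral_mono_ae_restrict ((hIntG x hx).abs)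
          ((((hIntConst K₁)).add ((hIntLog x hx).abs)).const_mul _)
        filter_upwards [ae_restrict_mem hBm, ae_restrict_of_ae (hne_ae x)] with y hyB hyne
        exact hGub x hx y hyB hyne
      have hsplit : ∫ y in B, (1/(2*π)) * (K₁ + |Real.log (dist x y)|)
          = (1/(2*π)) * ((∫ _ in B, K₁) + ∫ y in B, |Real.log (dist x y)|) := by
        rw [← integral_add (hIntConst K₁) ((hIntLog x hx).abs), integral_const_mul]
      have hK₁int : (∫ _ in B, K₁) = K₁ * (π*σ^2) := by
        rw [setIntegral_const, measureReal_def, hvolBR, smul_eq_mul, mul_comm]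
      have hlogint : ∫ y in B, |Real.log (dist x y)| ≤ K₂ := by
        calc ∫ y in B, |Real.log (dist x y)|
            ≤ ∫ y in Metric.ball x (2*σ), |Real.log (dist x y)| := by
              apply setIntegral_mono_set ((integrableOn_log_dist x (by positivity)).abs)
                (ae_of_all _ fun y => abs_nonneg _)
              exact HasSubset.Subset.eventuallyLE (hBsub x hx)
          _ ≤ K₂ := integral_abs_log_dist_ball x (by positivity)
      calc ∫ y in B, |G x y| ≤ ∫ y in B, (1/(2*π)) * (K₁ + |Real.log (dist x y)|) := hmono
        _ = (1/(2*π)) * ((∫ _ in B, K₁) + ∫ y in B, |Real.log (dist x y)|) := hsplit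
        _ ≤ (1/(2*π)) * (K₁ * (π*σ^2) + K₂) := by
            rw [hK₁int]
            apply mul_le_mul_of_nonneg_left _ (by positivity)
            linarith
    calc |∫ y in B, G x y * c| ≤ ∫ y in B, |G x y| * c := habs
      _ = (∫ y in B, |G x y|) * c := by rw [integral_mul_const]
      _ ≤ ((1/(2*π)) * (K₁ * (π*σ^2) + K₂)) * c := mul_le_mul_of_nonneg_right hstep hc.le
      _ = M := hMdef.symm
  -- measurability of Gop ζ'
  have hGopMeas : StronglyMeasurable (fun x => Gop ζ' x) := by
    have hrw : (fun x => Gop ζ' x)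
        = fun x => ∫ y, halfPlane.indicator (fun z => G x z * ζ' z) y ∂volume := by
      funext x
      rw [integral_indicator measurableSet_halfPlane]
      rfl
    rw [hrw]
    apply StronglyMeasurable.integral_prod_right'
      (f := fun p : Pt × Pt => halfPlane.indicator (fun z => G p.1 z * ζ' z) p.2)
    apply Measurable.stronglyMeasurable
    have hrw2 : (fun p : Pt × Pt => halfPlane.indicator (fun z => G p.1 z * ζ' z) p.2)
        = Set.indicator {q : Pt × Pt | q.2 ∈ halfPlane} (fun q => G q.1 q.2 * ζ' q.2) := by
      funext p
      by_cases hp : p.2 ∈ halfPlane <;>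
        simp [Set.indicator_of_mem, Set.indicator_of_notMem, hp]
    rw [hrw2]
    exact (measurable_G2.mul (hζ'meas.comp measurable_snd)).indicator
      (measurable_snd measurableSet_halfPlane)
  have hIntGopB : IntegrableOn (fun x => c * Gop ζ' x) B volume := by
    apply Measure.integrableOn_of_bounded hvolBne
      ((hGopMeas.measurable.const_mul c).aestronglyMeasurable) (M := c * M)
    rw [ae_restrict_iff' hBm]
    refine ae_of_all _ fun x hx => ?_
    rw [Real.norm_eq_abs, abs_mul, abs_of_nonneg hc.le]
    exact mul_le_mul_of_nonneg_left (hGopub x hx) hc.le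
  -- lower bound for the quadratic term
  have hI1 : c₀ * κ * κ ≤ ∫ x in Dset r, ζ' x * Gop ζ' x := by
    have hrw : (fun x => ζ' x * Gop ζ' x) = fun x => B.indicator (fun x => c * Gop ζ' x) x := by
      funext x
      by_cases hx : x ∈ B <;>
        simp [hζ'def, Set.indicator_of_mem, Set.indicator_of_notMem, hx]
    rw [hrw, setIntegral_indicator hBm, Set.inter_eq_self_of_subset_right hB_D]
    have hmono : ∫ _ in B, c * (c₀ * κ) ≤ ∫ x in B, c * Gop ζ' x := by
      apply setIntegral_mono_ae_restrict (hIntConst _) hIntGopB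
      rw [Filter.EventuallyLE, ae_restrict_iff' hBm]
      refine ae_of_all _ fun x hx => ?_
      exact mul_le_mul_of_nonneg_left (hGoplb x hx) hc.le
    calc c₀ * κ * κ = (volume B).toReal • (c * (c₀ * κ)) := by
          rw [hvolBR, smul_eq_mul, ← hmass_aux]; ring
      _ = ∫ _ in B, c * (c₀ * κ) := (setIntegral_const _).symm
      _ ≤ _ := hmono
  -- upper bound for the momentum term
  have hI2 : ∫ x in Dset r, (x 0) * ζ' x ≤ 2*r*κ := by
    have hrw : (fun x : Pt => (x 0) * ζ' x) = fun x => B.indicator (fun x => (x 0) * c) x := by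
      funext x
      by_cases hx : x ∈ B <;>
        simp [hζ'def, Set.indicator_of_mem, Set.indicator_of_notMem, hx]
    rw [hrw, setIntegral_indicator hBm, Set.inter_eq_self_of_subset_right hB_D]
    have hint : IntegrableOn (fun x : Pt => (x 0) * c) B volume := by
      apply Measure.integrableOn_of_bounded hvolBne
        (((measurable_coord 0).mul_const c).aestronglyMeasurable) (M := 2*r*c)
      rw [ae_restrict_iff' hBm]
      refine ae_of_all _ fun x hx => ?_
      have h0 := abs_lt.mp (hBcoord x hx).1
      rw [Real.norm_eq_abs, abs_mul, abs_of_nonneg hc.le]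
      apply mul_le_mul_of_nonneg_right _ hc.le
      rw [abs_le]
      constructor <;> linarith
    have hmono : ∫ x in B, (x 0) * c ≤ ∫ _ in B, (2*r) * c := by
      apply setIntegral_mono_on hint (hIntConst _) hBm
      intro x hx
      have h0 := abs_lt.mp (hBcoord x hx).1
      apply mul_le_mul_of_nonneg_right _ hc.le
      linarith
    calc ∫ x in B, (x 0) * c ≤ ∫ _ in B, (2*r) * c := hmono
      _ = (volume B).toReal • ((2*r) * c) := setIntegral_const _
      _ = 2*r*κ := by rw [hvolBR, smul_eq_mul, ← hmass_aux]; ring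
  -- bound for the J term
  have hJ : (ENNReal.ofReal (ε⁻¹ ^ 2) * ∫⁻ x in Dset r, Jconj (ftr f ρ) (ε^2 * ζ' x) ∂volume)
      ≤ ENNReal.ofReal κ := by
    have hpt : ∀ x, Jconj (ftr f ρ) (ε^2 * ζ' x)
        ≤ B.indicator (fun _ => ENNReal.ofReal (f 1)) x := by
      intro x
      by_cases hx : x ∈ B
      · rw [Set.indicator_of_mem hx]
        have harg : ε^2 * ζ' x = f 1 := by
          rw [hζ'def, Set.indicator_of_mem hx, hcdef]
          field_simp
        rw [harg]
        exact jconj_f1 hf hf1 hρ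
      · rw [Set.indicator_of_notMem hx]
        have harg : ε^2 * ζ' x = 0 := by
          rw [hζ'def, Set.indicator_of_notMem hx, mul_zero]
        rw [harg, jconj_zero hf hf1]
    calc ENNReal.ofReal (ε⁻¹ ^ 2) * ∫⁻ x in Dset r, Jconj (ftr f ρ) (ε^2 * ζ' x) ∂volume
        ≤ ENNReal.ofReal (ε⁻¹ ^ 2)
            * ∫⁻ x in Dset r, B.indicator (fun _ => ENNReal.ofReal (f 1)) x ∂volume := by
          apply mul_le_mul_right
          exact lintegral_mono hpt
      _ ≤ ENNReal.ofReal (ε⁻¹ ^ 2)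
            * ∫⁻ x, B.indicator (fun _ => ENNReal.ofReal (f 1)) x ∂volume := by
          apply mul_le_mul_right
          exact lintegral_mono' Measure.restrict_le_self le_rfl
      _ = ENNReal.ofReal (ε⁻¹ ^ 2) * (ENNReal.ofReal (f 1) * volume B) := by
          rw [lintegral_indicator hBm, setLIntegral_const]
      _ = ENNReal.ofReal κ := by
          rw [hvolB, ← ENNReal.ofReal_mul hf1pos.le, ← ENNReal.ofReal_mul (by positivity)]
          congr 1
          rw [← hmass_aux, hcdef]
          rw [inv_pow]
          ring
  -- assemble: lower bound for energy of ζ'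
  have hWpos : 0 < W := by rw [hW]; positivity
  have hEζ' : ((κ^2/(4*π) * Real.log (1/ε) - C : ℝ) : EReal) ≤ energy (ftr f ρ) r W ε ζ' := by
    show _ ≤ (((1/2) * (∫ x in Dset r, ζ' x * Gop ζ' x) - W * ∫ x in Dset r, (x 0) * ζ' x : ℝ) : EReal)
      - ((ENNReal.ofReal (ε⁻¹ ^ 2) * ∫⁻ x in Dset r, Jconj (ftr f ρ) (ε^2 * ζ' x) : ℝ≥0∞) : EReal)
    set a : ℝ := (1/2) * (∫ x in Dset r, ζ' x * Gop ζ' x) - W * ∫ x in Dset r, (x 0) * ζ' x with hadef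
    set b : ℝ≥0∞ := ENNReal.ofReal (ε⁻¹ ^ 2) * ∫⁻ x in Dset r, Jconj (ftr f ρ) (ε^2 * ζ' x) with hbdef
    have h1 : (b : EReal) ≤ ((κ : ℝ) : EReal) := by
      calc (b : EReal) ≤ ((ENNReal.ofReal κ : ℝ≥0∞) : EReal) :=
            EReal.coe_ennreal_le_coe_ennreal_iff.mpr hJ
        _ = ((κ ⊔ 0 : ℝ) : EReal) := EReal.coe_ennreal_ofReal
        _ = ((κ : ℝ) : EReal) := by rw [sup_eq_left.mpr hκ.le]
    have h2 : ((a - κ : ℝ) : EReal) ≤ (a : EReal) - (b : EReal) := by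
      rw [EReal.coe_sub]
      exact EReal.sub_le_sub (le_refl _) h1
    refine le_trans ?_ h2
    rw [EReal.coe_le_coe_iff]
    -- real arithmetic
    have hW2 : W * (2*r*κ) = κ^2/(2*π) := by
      rw [hW]; field_simp; ring
    have hlogsplit : Real.log (r/(2*σ)) = Real.log (r/(2*s₀)) + Real.log (1/ε) := by
      rw [← Real.log_mul (by positivity) (by positivity)]
      congr 1
      rw [hσdef]
      field_simp
    have hI2' : W * (∫ x in Dset r, (x 0) * ζ' x) ≤ κ^2/(2*π) := by
      rw [← hW2]
      exact mul_le_mul_of_nonneg_left hI2 hWpos.le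
    have hc₀κ : (1/2) * (c₀ * κ * κ) = κ^2/(4*π) * Real.log (r/(2*σ)) := by
      rw [hc₀def]; ring
    have hIa : κ^2/(4*π) * Real.log (r/(2*σ)) - κ^2/(2*π) ≤ a := by
      rw [hadef, ← hc₀κ]
      have := mul_le_mul_of_nonneg_left hI1 (by norm_num : (0:ℝ) ≤ 1/2)
      linarith
    have habslog : -|Real.log (r / (2*s₀))| ≤ Real.log (r / (2*s₀)) := neg_abs_le _
    have hnn : (0:ℝ) ≤ κ^2/(4*π) := by positivity
    rw [hCdef]
    rw [hlogsplit] at hIa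
    nlinarith [mul_le_mul_of_nonneg_left habslog hnn]
  exact le_trans hEζ' (hmax.2.2.1 ζ' hInA)

end
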